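/- Let G be a positive trace-class operator on a Hilbert space H with eigenvalues λ₁ ≥ λ₂ ≥ … (listed with multiplicity, from an orthonormal eigenbasis) and let (ψᵢ) be any orthonormal basis. Then for every n, ∑_{k=1}^n ⟨ψₖ, Gψₖ⟩ ≤ ∑_{k=1}^n λₖ. -/

import Mathlib

open scoped InnerProductSpace ComplexConjugate
noncomputable section

variable {H : Type*} [NormedAddCommGroup H] [InnerProductSpace ℂ H]

/-- The rank-one operator `|u⟩⟨v| : w ↦ ⟪v, w⟫ u` (inner product conjugate-linear
in the first variable). -/
def rankOne (u v : H) : H →L[ℂ] H := (innerSL ℂ v).smulRight u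

lemma key_hasSum [CompleteSpace H] (G : H →L[ℂ] H) (hGa : IsSelfAdjoint G) (lam : ℕ → ℝ)
    (e : HilbertBasis ℕ ℂ H) (heig : ∀ k, G (e k) = (lam k : ℂ) • e k) (x : H) :
    HasSum (fun j => lam j * ‖⟪e j, x⟫_ℂ‖ ^ 2) (⟪x, G x⟫_ℂ).re := by
  have hsym := ContinuousLinearMap.isSelfAdjoint_iff_isSymmetric.mp hGa
  have h := e.hasSum_inner_mul_inner x (G x)
  have heq : ∀ j, ⟪x, e j⟫_ℂ * ⟪e j, G x⟫_ℂ = ((lam j * ‖⟪e j, x⟫_ℂ‖ ^ 2 : ℝ) : ℂ) := by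
    intro j
    have h1 : ⟪e j, G x⟫_ℂ = (lam j : ℂ) * ⟪e j, x⟫_ℂ := by
      have hs := hsym (e j) x
      simp only [ContinuousLinearMap.coe_coe] at hs
      rw [← hs, heig j, inner_smul_left, Complex.conj_ofReal]
    have h2 : ⟪x, e j⟫_ℂ = conj ⟪e j, x⟫_ℂ := (inner_conj_symm _ _).symm
    rw [h1, h2]
    have h3 : conj ⟪e j, x⟫_ℂ * ((lam j : ℂ) * ⟪e j, x⟫_ℂ)
        = (lam j : ℂ) * (conj ⟪e j, x⟫_ℂ * ⟪e j, x⟫_ℂ) := by ring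
    have h4 : Complex.normSq ⟪e j, x⟫_ℂ = ‖⟪e j, x⟫_ℂ‖ ^ 2 := by
      rw [Complex.normSq_eq_norm_sq]
    rw [h3, mul_comm ((starRingEnd ℂ) _), Complex.mul_conj, h4, ← Complex.ofReal_mul]
  simp_rw [heq] at h
  have h2 := h.mapL Complex.reCLM
  simpa only [Complex.reCLM_apply, Complex.ofReal_re] using h2

lemma parseval_hasSum [CompleteSpace H] (e : HilbertBasis ℕ ℂ H) (x : H) :
    HasSum (fun j => ‖⟪e j, x⟫_ℂ‖ ^ 2) (‖x‖ ^ 2) := by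
  have h := e.hasSum_inner_mul_inner x x
  have heq : ∀ j, ⟪x, e j⟫_ℂ * ⟪e j, x⟫_ℂ = ((‖⟪e j, x⟫_ℂ‖ ^ 2 : ℝ) : ℂ) := by
    intro j
    calc ⟪x, e j⟫_ℂ * ⟪e j, x⟫_ℂ = conj ⟪e j, x⟫_ℂ * ⟪e j, x⟫_ℂ := by
          rw [inner_conj_symm]
      _ = ((‖⟪e j, x⟫_ℂ‖ ^ 2 : ℝ) : ℂ) := by
          have h4 : Complex.normSq ⟪e j, x⟫_ℂ = ‖⟪e j, x⟫_ℂ‖ ^ 2 := by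
            rw [Complex.normSq_eq_norm_sq]
          rw [mul_comm, Complex.mul_conj, h4]
  simp_rw [heq] at h
  have h2 := h.mapL Complex.reCLM
  have h3 : (⟪x, x⟫_ℂ).re = ‖x‖ ^ 2 := by
    have h4 := inner_self_eq_norm_sq (𝕜 := ℂ) x
    simpa [RCLike.re_to_complex] using h4
  simpa only [Complex.reCLM_apply, Complex.ofReal_re, h3] using h2

set_option maxHeartbeats 800000 in
theorem stmt16 [CompleteSpace H] (G : H →L[ℂ] H) (hGa : IsSelfAdjoint G)
    (lam : ℕ → ℝ) (hpos : ∀ k, 0 ≤ lam k) (hmono : Antitone lam) (hsum : Summable lam)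
    (e : HilbertBasis ℕ ℂ H) (heig : ∀ k, G (e k) = (lam k : ℂ) • e k)
    (b : HilbertBasis ℕ ℂ H) (n : ℕ) :
    ∑ k ∈ Finset.range n, (⟪b k, G (b k)⟫_ℂ).re ≤ ∑ k ∈ Finset.range n, lam k := by
  classical
  set t : ℕ → ℝ := fun j => ∑ k ∈ Finset.range n, ‖⟪e j, b k⟫_ℂ‖ ^ 2 with ht
  have ht0 : ∀ j, 0 ≤ t j := fun j =>
    Finset.sum_nonneg fun k _ => sq_nonneg _
  have ht1 : ∀ j, t j ≤ 1 := by
    intro j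
    calc t j = ∑ k ∈ Finset.range n, ‖⟪b k, e j⟫_ℂ‖ ^ 2 := by
          refine Finset.sum_congr rfl fun k _ => ?_
          rw [norm_inner_symm]
      _ ≤ ‖e j‖ ^ 2 := b.orthonormal.sum_inner_products_le _
      _ = 1 := by rw [e.orthonormal.1 j]; norm_num
  -- HasSum t n
  have hsum1 : ∑ k ∈ Finset.range n, ‖b k‖ ^ 2 = (n : ℝ) := by
    rw [Finset.sum_congr rfl (fun k _ => by rw [b.orthonormal.1 k]; norm_num : ∀ k ∈ Finset.range n, ‖b k‖ ^ 2 = (1:ℝ))]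
    simp
  have hT : HasSum t (n : ℝ) := by
    have h2 := hasSum_sum (f := fun k j => ‖⟪e j, b k⟫_ℂ‖ ^ 2) (s := Finset.range n)
      (a := fun k => ‖b k‖ ^ 2) (fun k _ => parseval_hasSum e (b k))
    rw [hsum1] at h2
    exact h2
  -- rewrite LHS
  have hkey : ∀ x : H, HasSum (fun j => lam j * ‖⟪e j, x⟫_ℂ‖ ^ 2) (⟪x, G x⟫_ℂ).re :=
    key_hasSum G hGa lam e heig
  have hL : ∑ k ∈ Finset.range n, (⟪b k, G (b k)⟫_ℂ).re = ∑' j, lam j * t j := by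
    have h1 : ∀ k ∈ Finset.range n,
        (⟪b k, G (b k)⟫_ℂ).re = ∑' j, lam j * ‖⟪e j, b k⟫_ℂ‖ ^ 2 :=
      fun k _ => (hkey (b k)).tsum_eq.symm
    rw [Finset.sum_congr rfl h1,
      ← Summable.tsum_finsetSum (fun k _ => (hkey (b k)).summable)]
    congr 1
    funext j
    rw [Finset.mul_sum]
  -- summability of lam * t
  have slt : Summable fun j => lam j * t j := by
    refine Summable.of_nonneg_of_le (fun j => mul_nonneg (hpos j) (ht0 j)) (fun j => ?_) hsum
    calc lam j * t j ≤ lam j * 1 := mul_le_mul_of_nonneg_left (ht1 j) (hpos j)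
      _ = lam j := mul_one _
  -- tail of t
  have hTtail : Summable fun i => t (i + n) := (summable_nat_add_iff n).mpr hT.summable
  have hTtail_eq : ∑' i, t (i + n) = (n : ℝ) - ∑ j ∈ Finset.range n, t j := by
    have := Summable.sum_add_tsum_nat_add (f := t) n hT.summable
    rw [hT.tsum_eq] at this
    linarith
  -- tail bound
  have stail : Summable fun i => lam (i + n) * t (i + n) :=
    (summable_nat_add_iff n).mpr slt
  have htail_le : ∑' i, lam (i + n) * t (i + n) ≤ lam n * ∑' i, t (i + n) := by
    rw [← tsum_mul_left]
    refine Summable.tsum_le_tsum (fun i => ?_) stail (hTtail.mul_left _)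
    exact mul_le_mul_of_nonneg_right (hmono (Nat.le_add_left n i)) (ht0 _)
  -- put together
  have hsplit := Summable.sum_add_tsum_nat_add (f := fun j => lam j * t j) n slt
  rw [hL, ← hsplit]
  have hfin : ∑ j ∈ Finset.range n, lam j * t j + lam n * ∑' i, t (i + n)
      ≤ ∑ j ∈ Finset.range n, lam j := by
    have e2 : ∑ j ∈ Finset.range n, lam n * (1 - t j)
        = lam n * ((n : ℝ) - ∑ j ∈ Finset.range n, t j) := by
      rw [← Finset.mul_sum, Finset.sum_sub_distrib]
      simp
    rw [hTtail_eq, ← e2, ← Finset.sum_add_distrib]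
    refine Finset.sum_le_sum fun j hj => ?_
    have hjn : lam n ≤ lam j := hmono (le_of_lt (Finset.mem_range.mp hj))
    nlinarith [ht1 j, ht0 j, hpos j]
  linarith [htail_le, hfin]
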